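/- Every N×N complex lower band matrix A of order r admits a factorization A = U·R, where R is an upper triangular matrix and U is a unitary matrix of the form U = Ũ_1·Ũ_2⋯Ũ_{N−r+1} (product in increasing order of indices), the embedded factors being built from unitary matrices U_k ∈ ℂ^{(r+1)×(r+1)} (k = 1,…,N−r) and a unitary matrix U_{N−r+1} ∈ ℂ^{r×r}. -/

import Mathlib

open Matrix

noncomputable section

/-- `A(i,j) = 0` whenever `i - j > r` (1-based; identical in 0-based `Fin` indexing). -/
def IsLowerBand (N r : ℕ) (A : Matrix (Fin N) (Fin N) ℂ) : Prop :=
  ∀ i j : Fin N, (j : ℕ) + r < (i : ℕ) → A i j = 0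

/-- `A(i,j) = 0` whenever `j - i > r`. -/
def IsUpperBand (N r : ℕ) (A : Matrix (Fin N) (Fin N) ℂ) : Prop :=
  ∀ i j : Fin N, (i : ℕ) + r < (j : ℕ) → A i j = 0

/-- `rank B(k:N, 1:k+r-1) ≤ r` for every `k = 1, …, N-r` (1-based). -/
def IsLowerGreen (N r : ℕ) (B : Matrix (Fin N) (Fin N) ℂ) : Prop :=
  ∀ (k : ℕ) (hk1 : 1 ≤ k) (hk2 : k ≤ N - r),
    (B.submatrix
      (fun i : Fin (N - k + 1) => (⟨k - 1 + (i : ℕ), by have := i.isLt; omega⟩ : Fin N))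
      (fun j : Fin (k + r - 1) => (⟨(j : ℕ), by have := j.isLt; omega⟩ : Fin N))).rank ≤ r

/-- `rank B(1:k+r-1, k:N) ≤ r` for every `k = 1, …, N-r` (1-based). -/
def IsUpperGreen (N r : ℕ) (B : Matrix (Fin N) (Fin N) ℂ) : Prop :=
  ∀ (k : ℕ) (hk1 : 1 ≤ k) (hk2 : k ≤ N - r),
    (B.submatrix
      (fun i : Fin (k + r - 1) => (⟨(i : ℕ), by have := i.isLt; omega⟩ : Fin N))
      (fun j : Fin (N - k + 1) => (⟨k - 1 + (j : ℕ), by have := j.isLt; omega⟩ : Fin N))).rank ≤ r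

/-- `a^>_{i,s} = a(i-1) a(i-2) ⋯ a(s+1)`, equal to `I_r` when `s ≥ i - 1`. -/
def aGT (r : ℕ) (a : ℕ → Matrix (Fin r) (Fin r) ℂ) (i s : ℕ) :
    Matrix (Fin r) (Fin r) ℂ :=
  (((List.range' (s + 1) (i - 1 - s)).reverse).map a).prod

/-- `p(i) ∈ ℂ^{1×r}` (i = 1,…,N−r), `pLast = p(N−r+1) ∈ ℂ^{r×r}`, `q(j) ∈ ℂ^{r×1}`,
`a(k) ∈ ℂ^{r×r}` are lower Green generators of the `N×N` matrix `B`: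
`B(i,1:r) = p(i)·a^>_{i,0}`, `B(i,r+s-1) = p(i)·a^>_{i,s-1}·q(s-1)` for `2 ≤ s ≤ i ≤ N-r`,
and the analogous identities for the last `r` rows `B(N-r+1:N, ·)` with `pLast`. -/
def IsLowerGreenGenerators (N r : ℕ) (hNr : r < N)
    (p : ℕ → Matrix (Fin 1) (Fin r) ℂ) (q : ℕ → Matrix (Fin r) (Fin 1) ℂ)
    (a : ℕ → Matrix (Fin r) (Fin r) ℂ) (pLast : Matrix (Fin r) (Fin r) ℂ)
    (B : Matrix (Fin N) (Fin N) ℂ) : Prop :=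
  (∀ (i : ℕ) (hi1 : 1 ≤ i) (hi2 : i ≤ N - r) (j : Fin r),
      B ⟨i - 1, by omega⟩ ⟨(j : ℕ), by have := j.isLt; omega⟩ = (p i * aGT r a i 0) 0 j)
  ∧ (∀ (i : ℕ) (hi1 : 1 ≤ i) (hi2 : i ≤ N - r) (s : ℕ) (hs1 : 2 ≤ s) (hs2 : s ≤ i),
      B ⟨i - 1, by omega⟩ ⟨r + s - 2, by omega⟩
        = (p i * aGT r a i (s - 1) * q (s - 1)) 0 0)
  ∧ (∀ (t : Fin r) (j : Fin r),
      B ⟨N - r + (t : ℕ), by have := t.isLt; omega⟩ ⟨(j : ℕ), by have := j.isLt; omega⟩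
        = (pLast * aGT r a (N - r + 1) 0) t j)
  ∧ (∀ (t : Fin r) (s : ℕ) (hs1 : 2 ≤ s) (hs2 : s ≤ N - r + 1),
      B ⟨N - r + (t : ℕ), by have := t.isLt; omega⟩ ⟨r + s - 2, by omega⟩
        = (pLast * aGT r a (N - r + 1) (s - 1) * q (s - 1)) t 0)

/-- The embedded factor `I_{k-1} ⊕ M ⊕ I_{N-k-r}` (1-based block position `k`),
i.e. `M` occupies (1-based) rows and columns `k, …, k+r` of an `N×N` identity. -/
def embed (N r k : ℕ) (M : Matrix (Fin (r + 1)) (Fin (r + 1)) ℂ) :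
    Matrix (Fin N) (Fin N) ℂ :=
  Matrix.of fun i j =>
    if h : k - 1 ≤ (i : ℕ) ∧ (i : ℕ) < k + r ∧ k - 1 ≤ (j : ℕ) ∧ (j : ℕ) < k + r then
      M ⟨(i : ℕ) - (k - 1), by omega⟩ ⟨(j : ℕ) - (k - 1), by omega⟩
    else if (i : ℕ) = (j : ℕ) then 1 else 0

/-- The embedded last factor `I_{N-r} ⊕ M`. -/
def embedLast (N r : ℕ) (M : Matrix (Fin r) (Fin r) ℂ) : Matrix (Fin N) (Fin N) ℂ :=
  Matrix.of fun i j =>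
    if h : N - r ≤ (i : ℕ) ∧ N - r ≤ (j : ℕ) then
      M ⟨(i : ℕ) - (N - r), by have := i.isLt; omega⟩
        ⟨(j : ℕ) - (N - r), by have := j.isLt; omega⟩
    else if (i : ℕ) = (j : ℕ) then 1 else 0

/-- `G̃_1 · G̃_2 ⋯ G̃_{N-r}` (increasing order of indices). -/
def prodAsc (N r : ℕ) (G : ℕ → Matrix (Fin (r + 1)) (Fin (r + 1)) ℂ) :
    Matrix (Fin N) (Fin N) ℂ :=
  ((List.range' 1 (N - r)).map (fun k => embed N r k (G k))).prod

/-- `G̃_{N-r} · G̃_{N-r-1} ⋯ G̃_1` (decreasing order of indices). -/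
def prodDesc (N r : ℕ) (G : ℕ → Matrix (Fin (r + 1)) (Fin (r + 1)) ℂ) :
    Matrix (Fin N) (Fin N) ℂ :=
  (((List.range' 1 (N - r)).reverse).map (fun k => embed N r k (G k))).prod

/-- The `1×r` block `p` of the partition `M = [[p, d], [a, q]]`. -/
def blkP (r : ℕ) (M : Matrix (Fin (r + 1)) (Fin (r + 1)) ℂ) : Matrix (Fin 1) (Fin r) ℂ :=
  Matrix.of fun _ j => M 0 j.castSucc

/-- The `1×1` block `d` of the partition `M = [[p, d], [a, q]]`. -/
def blkD (r : ℕ) (M : Matrix (Fin (r + 1)) (Fin (r + 1)) ℂ) : ℂ := M 0 (Fin.last r)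

/-- The `r×r` block `a` of the partition `M = [[p, d], [a, q]]`. -/
def blkA (r : ℕ) (M : Matrix (Fin (r + 1)) (Fin (r + 1)) ℂ) : Matrix (Fin r) (Fin r) ℂ :=
  Matrix.of fun i j => M i.succ j.castSucc

/-- The `r×1` block `q` of the partition `M = [[p, d], [a, q]]`. -/
def blkQ (r : ℕ) (M : Matrix (Fin (r + 1)) (Fin (r + 1)) ℂ) : Matrix (Fin r) (Fin 1) ℂ :=
  Matrix.of fun i _ => M i.succ (Fin.last r)

/-- Assemble the `(r+1)×(r+1)` matrix `[[p, d], [a, q]]` from its blocks. -/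
def mkBlk (r : ℕ) (p : Matrix (Fin 1) (Fin r) ℂ) (d : ℂ)
    (a : Matrix (Fin r) (Fin r) ℂ) (q : Matrix (Fin r) (Fin 1) ℂ) :
    Matrix (Fin (r + 1)) (Fin (r + 1)) ℂ :=
  Matrix.of fun i j =>
    if hi : (i : ℕ) = 0 then
      if hj : (j : ℕ) < r then p 0 ⟨(j : ℕ), hj⟩ else d
    else
      if hj : (j : ℕ) < r then a ⟨(i : ℕ) - 1, by have := i.isLt; omega⟩ ⟨(j : ℕ), hj⟩
      else q ⟨(i : ℕ) - 1, by have := i.isLt; omega⟩ 0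

/-- The elementary Gauss factor `[[1, 0_{1×r}], [-f, I_r]]`. -/
def elemL (r : ℕ) (f : Matrix (Fin r) (Fin 1) ℂ) :
    Matrix (Fin (r + 1)) (Fin (r + 1)) ℂ :=
  Matrix.of fun i j =>
    if hi : (i : ℕ) = 0 then (if (j : ℕ) = 0 then 1 else 0)
    else if hj : (j : ℕ) = 0 then -f ⟨(i : ℕ) - 1, by have := i.isLt; omega⟩ 0
    else if (i : ℕ) = (j : ℕ) then 1 else 0

/-- The elementary factor `[[I_r, 0_{r×1}], [-g, 1]]`. -/
def elemLrow (r : ℕ) (g : Matrix (Fin 1) (Fin r) ℂ) :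
    Matrix (Fin (r + 1)) (Fin (r + 1)) ℂ :=
  Matrix.of fun i j =>
    if hi : (i : ℕ) < r then
      (if hj : (j : ℕ) < r then (if (i : ℕ) = (j : ℕ) then 1 else 0) else 0)
    else if hj : (j : ℕ) < r then -g 0 ⟨(j : ℕ), hj⟩ else 1

/-- All leading principal minors are nonzero. -/
def StronglyRegular (N : ℕ) (A : Matrix (Fin N) (Fin N) ℂ) : Prop :=
  ∀ (k : ℕ) (hk : k ≤ N), 1 ≤ k →
    (A.submatrix (Fin.castLE hk) (Fin.castLE hk)).det ≠ 0


/-! ### Auxiliary machinery for the proof -/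

/-- A generic embedded block `I ⊕ M ⊕ I`, with `M` occupying (0-based) rows and
columns `o, …, o+m-1`. -/
def embedG (N o m : ℕ) (M : Matrix (Fin m) (Fin m) ℂ) : Matrix (Fin N) (Fin N) ℂ :=
  Matrix.of fun i j =>
    if h : o ≤ (i : ℕ) ∧ (i : ℕ) < o + m ∧ o ≤ (j : ℕ) ∧ (j : ℕ) < o + m then
      M ⟨(i : ℕ) - o, by omega⟩ ⟨(j : ℕ) - o, by omega⟩
    else if (i : ℕ) = (j : ℕ) then 1 else 0

lemma sum_window {N o m : ℕ} (hom : o + m ≤ N) (f : Fin N → ℂ)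
    (hf : ∀ l : Fin N, ¬(o ≤ (l : ℕ) ∧ (l : ℕ) < o + m) → f l = 0) :
    ∑ l, f l = ∑ t : Fin m, f ⟨o + (t : ℕ), by omega⟩ := by
  classical
  set e : Fin m → Fin N := fun t => ⟨o + t, by omega⟩ with he
  have hinj : ∀ x ∈ Finset.univ, ∀ y ∈ Finset.univ, e x = e y → x = y := by
    intro a _ b _ hab
    have : o + (a : ℕ) = o + (b : ℕ) := congrArg Fin.val hab
    exact Fin.ext (by omega)
  rw [show (∑ t : Fin m, f (e t)) = ∑ l ∈ Finset.univ.image e, f l from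
    (Finset.sum_image hinj).symm]
  refine (Finset.sum_subset (Finset.subset_univ _) ?_).symm
  intro l _ hl
  refine hf l (fun hwin => hl (Finset.mem_image.mpr ⟨⟨(l : ℕ) - o, by omega⟩,
    Finset.mem_univ _, Fin.ext (by simp [he]; omega)⟩))

lemma embedG_mul_right_apply {N o m : ℕ} (hom : o + m ≤ N) (M : Matrix (Fin m) (Fin m) ℂ)
    (B : Matrix (Fin N) (Fin N) ℂ) (i j : Fin N) :
    (embedG N o m M * B) i j =
      if h : o ≤ (i : ℕ) ∧ (i : ℕ) < o + m then
        ∑ t : Fin m, M ⟨(i : ℕ) - o, by omega⟩ t * B ⟨o + (t : ℕ), by omega⟩ j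
      else B i j := by
  rw [Matrix.mul_apply]
  by_cases hi : o ≤ (i : ℕ) ∧ (i : ℕ) < o + m
  · rw [dif_pos hi,
      sum_window hom (fun l => embedG N o m M i l * B l j) (fun l hl => by
        show embedG N o m M i l * B l j = 0
        rw [show embedG N o m M i l = 0 from by
          rw [embedG, Matrix.of_apply, dif_neg (fun h => hl ⟨h.2.2.1, h.2.2.2⟩),
            if_neg (by intro h; exact hl ⟨by omega, by omega⟩)], zero_mul])]
    refine Finset.sum_congr rfl (fun t _ => ?_)
    congr 1
    rw [embedG, Matrix.of_apply, dif_pos ⟨hi.1, hi.2, by simp only [Fin.val_mk]; omega,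
      by simp only [Fin.val_mk]; omega⟩]
    congr 1
    exact Fin.ext (by simp)
  · rw [dif_neg hi]
    have : ∀ l, embedG N o m M i l = if i = l then 1 else 0 := fun l => by
      rw [embedG, Matrix.of_apply, dif_neg (fun h => hi ⟨h.1, h.2.1⟩)]
      simp [Fin.val_inj]
    simp [this]

lemma embedG_star {N o m : ℕ} (M : Matrix (Fin m) (Fin m) ℂ) :
    (embedG N o m M)ᴴ = embedG N o m Mᴴ := by
  ext i j
  rw [Matrix.conjTranspose_apply, embedG, embedG, Matrix.of_apply, Matrix.of_apply]
  by_cases h : o ≤ (i : ℕ) ∧ (i : ℕ) < o + m ∧ o ≤ (j : ℕ) ∧ (j : ℕ) < o + m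
  · rw [dif_pos h, dif_pos ⟨h.2.2.1, h.2.2.2, h.1, h.2.1⟩, Matrix.conjTranspose_apply]
  · rw [dif_neg h, dif_neg (fun h' => h ⟨h'.2.2.1, h'.2.2.2, h'.1, h'.2.1⟩)]
    by_cases hij : (i : ℕ) = (j : ℕ)
    · rw [if_pos hij, if_pos hij.symm, star_one]
    · rw [if_neg hij, if_neg (fun h' => hij h'.symm), star_zero]

lemma embedG_one {N o m : ℕ} : embedG N o m (1 : Matrix (Fin m) (Fin m) ℂ) = 1 := by
  ext i j
  rw [embedG, Matrix.of_apply]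
  by_cases h : o ≤ (i : ℕ) ∧ (i : ℕ) < o + m ∧ o ≤ (j : ℕ) ∧ (j : ℕ) < o + m
  · rw [dif_pos h, Matrix.one_apply, Matrix.one_apply]
    by_cases hij : i = j
    · rw [if_pos hij, if_pos (by subst hij; rfl)]
    · rw [if_neg hij, if_neg (fun h' => hij (Fin.ext (by
        have := congrArg Fin.val h'; simp at this; omega)))]
  · rw [dif_neg h, Matrix.one_apply]
    by_cases hij : (i : ℕ) = (j : ℕ)
    · rw [if_pos hij, if_pos (Fin.ext hij)]
    · rw [if_neg hij, if_neg (fun h' => hij (congrArg Fin.val h'))]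

lemma embedG_mul {N o m : ℕ} (hom : o + m ≤ N) (M M' : Matrix (Fin m) (Fin m) ℂ) :
    embedG N o m M * embedG N o m M' = embedG N o m (M * M') := by
  ext i j
  rw [embedG_mul_right_apply hom]
  by_cases hi : o ≤ (i : ℕ) ∧ (i : ℕ) < o + m
  · rw [dif_pos hi]
    by_cases hj : o ≤ (j : ℕ) ∧ (j : ℕ) < o + m
    · rw [show embedG N o m (M * M') i j
          = (M * M') ⟨(i : ℕ) - o, by omega⟩ ⟨(j : ℕ) - o, by omega⟩ from by
        rw [embedG, Matrix.of_apply, dif_pos ⟨hi.1, hi.2, hj.1, hj.2⟩], Matrix.mul_apply]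
      refine Finset.sum_congr rfl (fun t _ => ?_)
      congr 1
      rw [embedG, Matrix.of_apply, dif_pos ⟨by simp only [Fin.val_mk]; omega,
        by simp only [Fin.val_mk]; omega, hj.1, hj.2⟩]
      congr 1
      exact Fin.ext (by simp)
    · have hz : ∀ t : Fin m, embedG N o m M' ⟨o + (t : ℕ), by omega⟩ j = 0 := fun t => by
        rw [embedG, Matrix.of_apply, dif_neg (fun h => hj ⟨h.2.2.1, h.2.2.2⟩),
          if_neg (by simp only [Fin.val_mk]; omega)]
      rw [show embedG N o m (M * M') i j = 0 from by
        rw [embedG, Matrix.of_apply, dif_neg (fun h => hj ⟨h.2.2.1, h.2.2.2⟩),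
          if_neg (fun h' : (i : ℕ) = (j : ℕ) => hj ⟨h' ▸ hi.1, h' ▸ hi.2⟩)]]
      simp [hz]
  · rw [dif_neg hi, embedG, embedG, Matrix.of_apply, Matrix.of_apply,
      dif_neg (fun h => hi ⟨h.1, h.2.1⟩), dif_neg (fun h => hi ⟨h.1, h.2.1⟩)]

lemma embedG_mem {N o m : ℕ} (hom : o + m ≤ N) {M : Matrix (Fin m) (Fin m) ℂ}
    (hM : M ∈ Matrix.unitaryGroup (Fin m) ℂ) :
    embedG N o m M ∈ Matrix.unitaryGroup (Fin N) ℂ := by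
  rw [Matrix.mem_unitaryGroup_iff]
  have h1 : M * star M = 1 := Matrix.mem_unitaryGroup_iff.mp hM
  rw [Matrix.star_eq_conjTranspose, embedG_star, embedG_mul hom, ← Matrix.star_eq_conjTranspose,
    h1, embedG_one]

lemma embed_eq {N r k : ℕ} (hk : 1 ≤ k) (M : Matrix (Fin (r + 1)) (Fin (r + 1)) ℂ) :
    embed N r k M = embedG N (k - 1) (r + 1) M := by
  ext i j
  rw [embed, embedG, Matrix.of_apply, Matrix.of_apply]
  by_cases h : k - 1 ≤ (i : ℕ) ∧ (i : ℕ) < k + r ∧ k - 1 ≤ (j : ℕ) ∧ (j : ℕ) < k + r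
  · rw [dif_pos h, dif_pos (by omega)]
  · rw [dif_neg h, dif_neg (by omega)]

lemma embedLast_eq {N r : ℕ} (hr : r ≤ N) (M : Matrix (Fin r) (Fin r) ℂ) :
    embedLast N r M = embedG N (N - r) r M := by
  ext i j
  rw [embedLast, embedG, Matrix.of_apply, Matrix.of_apply]
  by_cases h : N - r ≤ (i : ℕ) ∧ N - r ≤ (j : ℕ)
  · rw [dif_pos h, dif_pos (by have := i.isLt; have := j.isLt; omega)]
  · rw [dif_neg h, dif_neg (by omega)]

lemma qr_exists (n : ℕ) (A : Matrix (Fin n) (Fin n) ℂ) :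
    ∃ Q : Matrix (Fin n) (Fin n) ℂ, Q ∈ Matrix.unitaryGroup (Fin n) ℂ ∧
      ∀ i j : Fin n, (j : ℕ) < (i : ℕ) → (Qᴴ * A) i j = 0 := by
  classical
  have hdim : Module.finrank ℂ (EuclideanSpace ℂ (Fin n)) = Fintype.card (Fin n) := by
    simp [finrank_euclideanSpace]
  let f : Fin n → EuclideanSpace ℂ (Fin n) := fun j => WithLp.toLp 2 (fun i => A i j)
  haveI : WellFoundedLT (Fin n) := inferInstance
  let b : OrthonormalBasis (Fin n) ℂ (EuclideanSpace ℂ (Fin n)) :=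
    InnerProductSpace.gramSchmidtOrthonormalBasis (𝕜 := ℂ) (E := EuclideanSpace ℂ (Fin n)) (ι := Fin n) hdim f
  have horth := b.orthonormal
  rw [orthonormal_iff_ite] at horth
  refine ⟨Matrix.of (fun i j => b j i), ?_, ?_⟩
  · rw [Matrix.mem_unitaryGroup_iff']
    ext i j
    have h := horth i j
    simp only [PiLp.inner_apply, RCLike.inner_apply] at h
    simp only [Matrix.mul_apply, Matrix.conjTranspose_apply, Matrix.of_apply, Matrix.one_apply,
      Matrix.star_apply, RCLike.star_def]
    exact Eq.trans (Finset.sum_congr rfl fun _ _ => mul_comm _ _) h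
  · intro i j hij
    have h := InnerProductSpace.gramSchmidtOrthonormalBasis_inv_triangular (𝕜 := ℂ) hdim f
      (i := j) (j := i) (by exact Fin.lt_def.mpr hij)
    simp only [PiLp.inner_apply, RCLike.inner_apply] at h
    simp only [Matrix.mul_apply, Matrix.conjTranspose_apply, Matrix.of_apply]
    rw [← h]
    exact Finset.sum_congr rfl fun _ _ => mul_comm _ _

lemma pick_exists (n : ℕ) (v : Fin n → ℂ) :
    ∃ W : Matrix (Fin n) (Fin n) ℂ, W ∈ Matrix.unitaryGroup (Fin n) ℂ ∧
      ∀ t : Fin n, (t : ℕ) ≠ 0 → (Wᴴ *ᵥ v) t = 0 := by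
  obtain ⟨Q, hQ, htri⟩ := qr_exists n (Matrix.of fun i j => if (j : ℕ) = 0 then v i else 0)
  refine ⟨Q, hQ, fun t ht => ?_⟩
  have h0 : (0 : ℕ) < n := Nat.pos_of_ne_zero (by rintro rfl; exact t.elim0)
  have := htri t ⟨0, h0⟩ (Nat.pos_of_ne_zero ht)
  rw [Matrix.mul_apply] at this
  simpa [Matrix.mulVec, dotProduct] using this

def pick (n : ℕ) (v : Fin n → ℂ) : Matrix (Fin n) (Fin n) ℂ := (pick_exists n v).choose

lemma pick_mem (n : ℕ) (v : Fin n → ℂ) : pick n v ∈ Matrix.unitaryGroup (Fin n) ℂ :=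
  (pick_exists n v).choose_spec.1

lemma pick_zero (n : ℕ) (v : Fin n → ℂ) (t : Fin n) (ht : (t : ℕ) ≠ 0) :
    ((pick n v)ᴴ *ᵥ v) t = 0 := (pick_exists n v).choose_spec.2 t ht

def colv (N r : ℕ) (B : Matrix (Fin N) (Fin N) ℂ) (k : ℕ) : Fin (r + 1) → ℂ :=
  fun t => if h : k + (t : ℕ) < N ∧ k < N then B ⟨k + t, h.1⟩ ⟨k, h.2⟩ else 0

def Bseq (N r : ℕ) (A : Matrix (Fin N) (Fin N) ℂ) : ℕ → Matrix (Fin N) (Fin N) ℂ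
  | 0 => A
  | k + 1 => embedG N k (r + 1) (pick (r + 1) (colv N r (Bseq N r A k) k))ᴴ * Bseq N r A k

def Useq (N r : ℕ) (A : Matrix (Fin N) (Fin N) ℂ) (k : ℕ) :
    Matrix (Fin (r + 1)) (Fin (r + 1)) ℂ :=
  pick (r + 1) (colv N r (Bseq N r A (k - 1)) (k - 1))

lemma Bseq_inv (N r : ℕ) (hNr : r < N) (A : Matrix (Fin N) (Fin N) ℂ)
    (hband : IsLowerBand N r A) :
    ∀ k, k ≤ N - r →
      (∀ i j : Fin N, (j : ℕ) + r < (i : ℕ) → Bseq N r A k i j = 0) ∧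
      (∀ i j : Fin N, (j : ℕ) < (i : ℕ) → (j : ℕ) < k → Bseq N r A k i j = 0) := by
  intro k
  induction k with
  | zero => exact fun _ => ⟨hband, fun i j _ h => absurd h (Nat.not_lt_zero _)⟩
  | succ k ih =>
    intro hk1
    obtain ⟨ihband, ihtri⟩ := ih (by omega)
    have hwin : k + (r + 1) ≤ N := by omega
    have hstep : Bseq N r A (k + 1)
        = embedG N k (r + 1) (pick (r + 1) (colv N r (Bseq N r A k) k))ᴴ * Bseq N r A k := by
      rw [Bseq]
    constructor
    · intro i j hij
      rw [hstep, embedG_mul_right_apply hwin]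
      by_cases hi : k ≤ (i : ℕ) ∧ (i : ℕ) < k + (r + 1)
      · rw [dif_pos hi]
        refine Finset.sum_eq_zero fun t _ => ?_
        rw [ihtri ⟨k + t, by omega⟩ j (by simp only [Fin.val_mk]; omega) (by omega), mul_zero]
      · rw [dif_neg hi]; exact ihband i j hij
    · intro i j hij hjk
      rw [hstep, embedG_mul_right_apply hwin]
      by_cases hi : k ≤ (i : ℕ) ∧ (i : ℕ) < k + (r + 1)
      · rw [dif_pos hi]
        by_cases hjk' : (j : ℕ) < k
        · refine Finset.sum_eq_zero fun t _ => ?_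
          rw [ihtri ⟨k + t, by omega⟩ j (by simp only [Fin.val_mk]; omega) hjk', mul_zero]
        · have hj : (j : ℕ) = k := by omega
          have hcv : ∀ t : Fin (r + 1),
              Bseq N r A k ⟨k + (t : ℕ), by omega⟩ j = colv N r (Bseq N r A k) k t := by
            intro t
            rw [colv, dif_pos ⟨by omega, by omega⟩]
            congr 1
            exact Fin.ext (by simp only [Fin.val_mk]; omega)
          have hsum : ∑ t : Fin (r + 1),
                (pick (r + 1) (colv N r (Bseq N r A k) k))ᴴ ⟨(i : ℕ) - k, by omega⟩ t
                  * Bseq N r A k ⟨k + (t : ℕ), by omega⟩ j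
              = ((pick (r + 1) (colv N r (Bseq N r A k) k))ᴴ
                  *ᵥ colv N r (Bseq N r A k) k) ⟨(i : ℕ) - k, by omega⟩ := by
            rw [Matrix.mulVec, dotProduct]
            exact Finset.sum_congr rfl fun t _ => by rw [hcv]
          rw [hsum]
          exact pick_zero _ _ _ (by simp only [Fin.val_mk]; omega)
      · rw [dif_neg hi]
        rcases Nat.lt_or_ge (i : ℕ) k with h' | h'
        · exact ihtri i j hij (by omega)
        · exact ihband i j (by omega)

lemma prod_Bseq (N r : ℕ) (hNr : r < N) (A : Matrix (Fin N) (Fin N) ℂ) :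
    ∀ m, m ≤ N - r →
      ((List.range' 1 m).map (fun k => embed N r k (Useq N r A k))).prod * Bseq N r A m = A := by
  intro m
  induction m with
  | zero => simp [Bseq]
  | succ m ih =>
    intro hm
    have hwin : m + (r + 1) ≤ N := by omega
    rw [List.range'_concat, List.map_append, List.prod_append]
    have hU : Useq N r A (1 + 1 * m) = pick (r + 1) (colv N r (Bseq N r A m) m) := by
      have : 1 + 1 * m - 1 = m := by omega
      rw [Useq, this]
    have hB : Bseq N r A (m + 1)
        = embedG N m (r + 1) (pick (r + 1) (colv N r (Bseq N r A m) m))ᴴ * Bseq N r A m := by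
      rw [Bseq]
    rw [List.map_singleton, List.prod_singleton, hB, hU,
      embed_eq (by omega), show 1 + 1 * m - 1 = m by omega,
      mul_assoc, ← mul_assoc (embedG N m (r + 1) _), embedG_mul hwin,
      ← Matrix.star_eq_conjTranspose,
      Matrix.mem_unitaryGroup_iff.mp (pick_mem (r + 1) (colv N r (Bseq N r A m) m)),
      embedG_one, one_mul]
    exact ih (by omega)


/-- Every lower band matrix `A` of order `r` admits a factorization `A = U·R` with `R`
upper triangular and `U` unitary of the form `U = Ũ_1·Ũ_2⋯Ũ_{N-r+1}`, the embedded factors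
being built from unitary `(r+1)×(r+1)` matrices `U_k` and a unitary `r×r` matrix `U_{N-r+1}`. -/
theorem lowerBand_qr (N r : ℕ) (hr : 0 < r) (hNr : r < N)
    (A : Matrix (Fin N) (Fin N) ℂ) (hband : IsLowerBand N r A) :
    ∃ (Uk : ℕ → Matrix (Fin (r + 1)) (Fin (r + 1)) ℂ)
      (Ulast : Matrix (Fin r) (Fin r) ℂ) (R : Matrix (Fin N) (Fin N) ℂ),
      (∀ (k : ℕ), 1 ≤ k → k ≤ N - r → Uk k ∈ Matrix.unitaryGroup (Fin (r + 1)) ℂ) ∧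
      Ulast ∈ Matrix.unitaryGroup (Fin r) ℂ ∧
      (prodAsc N r Uk * embedLast N r Ulast) ∈ Matrix.unitaryGroup (Fin N) ℂ ∧
      (∀ i j : Fin N, (j : ℕ) < (i : ℕ) → R i j = 0) ∧
      A = (prodAsc N r Uk * embedLast N r Ulast) * R := by
  classical
  obtain ⟨hCband, hCtri⟩ := Bseq_inv N r hNr A hband (N - r) le_rfl
  set C := Bseq N r A (N - r) with hC
  obtain ⟨Q, hQ, hQtri⟩ := qr_exists r
    (Matrix.of fun a b : Fin r => C ⟨N - r + (a : ℕ), by omega⟩ ⟨N - r + (b : ℕ), by omega⟩)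
  refine ⟨Useq N r A, Q, embedG N (N - r) r Qᴴ * C, fun k _ _ => pick_mem _ _, hQ, ?_, ?_, ?_⟩
  · apply mul_mem
    · rw [prodAsc]
      apply Submonoid.list_prod_mem
      intro x hx
      simp only [List.mem_map] at hx
      obtain ⟨k, hk, rfl⟩ := hx
      rw [List.mem_range'_1] at hk
      rw [embed_eq hk.1]
      exact embedG_mem (by omega) (pick_mem _ _)
    · rw [embedLast_eq (by omega)]
      exact embedG_mem (by omega) hQ
  · intro i j hij
    rw [embedG_mul_right_apply (by omega)]
    by_cases hi : N - r ≤ (i : ℕ) ∧ (i : ℕ) < N - r + r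
    · rw [dif_pos hi]
      by_cases hj : (j : ℕ) < N - r
      · refine Finset.sum_eq_zero fun t _ => ?_
        rw [hCtri ⟨N - r + t, by omega⟩ j (by simp only [Fin.val_mk]; omega) hj, mul_zero]
      · have h0 := hQtri ⟨(i : ℕ) - (N - r), by omega⟩ ⟨(j : ℕ) - (N - r), by omega⟩
          (by simp only [Fin.val_mk]; omega)
        rw [Matrix.mul_apply] at h0
        refine Eq.trans (Finset.sum_congr rfl fun t _ => ?_) h0
        rw [Matrix.of_apply]
        congr 1
        congr 1
        exact Fin.ext (by simp only [Fin.val_mk]; omega)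
    · rw [dif_neg hi]
      exact hCtri i j hij (by omega)
  · have hA : ((List.range' 1 (N - r)).map (fun k => embed N r k (Useq N r A k))).prod * C = A :=
      prod_Bseq N r hNr A (N - r) le_rfl
    rw [prodAsc, embedLast_eq (by omega), mul_assoc, ← mul_assoc (embedG N (N - r) r Q),
      embedG_mul (by omega),
      show Q * Qᴴ = 1 from by
        rw [← Matrix.star_eq_conjTranspose]; exact Matrix.mem_unitaryGroup_iff.mp hQ,
      embedG_one, one_mul, hA]
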